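/- Let ψ ∈ H_A ⊗ H_B be a unit vector and A, U ∈ B(H_A), B ∈ B(H_B) be unitaries with ⟨ψ, (U ⊗ I)ψ⟩ ≥ 1 − ε (real) and ⟨ψ, (A ⊗ B)ψ⟩ ≥ 1 − ε (real), for some ε ≥ 0. Then Re⟨ψ, (AUA* ⊗ I)ψ⟩ ≥ 1 − 9ε. -/

import Mathlib

open Kronecker

/-- Action of a matrix on a Euclidean-space vector. -/
noncomputable def act {ι κ : Type*} [Fintype ι] (M : Matrix κ ι ℂ) (x : EuclideanSpace ℂ ι) :
    EuclideanSpace ℂ κ := WithLp.toLp 2 (fun k => ∑ j, M k j * x j)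

lemma act_eq_clm {ι : Type*} [Fintype ι] [DecidableEq ι] (M : Matrix ι ι ℂ)
    (x : EuclideanSpace ℂ ι) : act M x = Matrix.toEuclideanCLM (𝕜 := ℂ) M x := rfl

lemma kron_conjTranspose {l m p q : Type*} (A : Matrix l m ℂ) (B : Matrix p q ℂ) :
    Matrix.conjTranspose (A ⊗ₖ B) = Matrix.conjTranspose A ⊗ₖ Matrix.conjTranspose B := by
  ext ⟨i, j⟩ ⟨k, l⟩
  simp [Matrix.conjTranspose_apply, mul_comm]

lemma kron_unitary {p q : Type*} [Fintype p] [DecidableEq p] [Fintype q] [DecidableEq q]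
    {A : Matrix p p ℂ} {B : Matrix q q ℂ}
    (hA : A ∈ unitary (Matrix p p ℂ)) (hB : B ∈ unitary (Matrix q q ℂ)) :
    A ⊗ₖ B ∈ unitary (Matrix (p × q) (p × q) ℂ) := by
  obtain ⟨hA1, hA2⟩ := Unitary.mem_iff.mp hA
  obtain ⟨hB1, hB2⟩ := Unitary.mem_iff.mp hB
  rw [Matrix.star_eq_conjTranspose] at hA1 hA2 hB1 hB2
  rw [Unitary.mem_iff, Matrix.star_eq_conjTranspose, kron_conjTranspose,
    ← Matrix.mul_kronecker_mul, ← Matrix.mul_kronecker_mul, hA1, hA2, hB1, hB2,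
    Matrix.one_kronecker_one]
  exact ⟨rfl, rfl⟩

lemma clm_unitary {ι : Type*} [Fintype ι] [DecidableEq ι] {M : Matrix ι ι ℂ}
    (hM : M ∈ unitary (Matrix ι ι ℂ)) :
    Matrix.toEuclideanCLM (𝕜 := ℂ) M ∈
      unitary (EuclideanSpace ℂ ι →L[ℂ] EuclideanSpace ℂ ι) := by
  rw [Unitary.mem_iff]
  constructor
  · rw [← map_star, ← map_mul, Unitary.star_mul_self_of_mem hM, map_one]
  · rw [← map_star, ← map_mul, Unitary.mul_star_self_of_mem hM, map_one]

lemma act_norm {ι : Type*} [Fintype ι] [DecidableEq ι] {M : Matrix ι ι ℂ}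
    (hM : M ∈ unitary (Matrix ι ι ℂ)) (x : EuclideanSpace ℂ ι) : ‖act M x‖ = ‖x‖ := by
  rw [act_eq_clm]
  exact ContinuousLinearMap.norm_map_of_mem_unitary (clm_unitary hM) x

lemma act_mul {ι : Type*} [Fintype ι] [DecidableEq ι] (M N : Matrix ι ι ℂ)
    (x : EuclideanSpace ℂ ι) : act (M * N) x = act M (act N x) := by
  rw [act_eq_clm, act_eq_clm, act_eq_clm, map_mul]
  rfl

lemma act_sub {ι : Type*} [Fintype ι] [DecidableEq ι] (M : Matrix ι ι ℂ)
    (x y : EuclideanSpace ℂ ι) : act M (x - y) = act M x - act M y := by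
  rw [act_eq_clm, act_eq_clm, act_eq_clm, map_sub]

lemma act_one {ι : Type*} [Fintype ι] [DecidableEq ι] (x : EuclideanSpace ℂ ι) :
    act (1 : Matrix ι ι ℂ) x = x := by
  rw [act_eq_clm, map_one]
  rfl

lemma norm_sq_formula {ι : Type*} [Fintype ι] [DecidableEq ι] {M : Matrix ι ι ℂ}
    (hM : M ∈ unitary (Matrix ι ι ℂ)) (x : EuclideanSpace ℂ ι) (hx : ‖x‖ = 1) :
    ‖act M x - x‖ ^ 2 = 2 - 2 * (inner ℂ x (act M x) : ℂ).re := by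
  have h := norm_sub_sq (𝕜 := ℂ) (act M x) x
  rw [act_norm hM x, hx] at h
  have hsymm : RCLike.re (inner ℂ (act M x) x : ℂ) = RCLike.re (inner ℂ x (act M x) : ℂ) :=
    inner_re_symm _ _
  rw [h, hsymm]
  simp [RCLike.re_to_complex]
  ring

/-- for unitaries `A, U` on `H_A`, `B` on `H_B` and a unit vector `ψ` with
`⟨ψ, (U ⊗ I)ψ⟩ ≥ 1 − ε` (real) and `⟨ψ, (A ⊗ B)ψ⟩ ≥ 1 − ε` (real), one has
`Re⟨ψ, (AUA* ⊗ I)ψ⟩ ≥ 1 − 9ε`. -/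
theorem stmt11 {m n : ℕ} (ε : ℝ) (hε : 0 ≤ ε)
    (A U : Matrix (Fin m) (Fin m) ℂ) (B : Matrix (Fin n) (Fin n) ℂ)
    (hA : A ∈ unitary (Matrix (Fin m) (Fin m) ℂ))
    (hU : U ∈ unitary (Matrix (Fin m) (Fin m) ℂ))
    (hB : B ∈ unitary (Matrix (Fin n) (Fin n) ℂ))
    (ψ : EuclideanSpace ℂ (Fin m × Fin n)) (hψ : ‖ψ‖ = 1)
    (h1re : 1 - ε ≤ (inner ℂ ψ (act (U ⊗ₖ (1 : Matrix (Fin n) (Fin n) ℂ)) ψ) : ℂ).re)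
    (h1im : (inner ℂ ψ (act (U ⊗ₖ (1 : Matrix (Fin n) (Fin n) ℂ)) ψ) : ℂ).im = 0)
    (h2re : 1 - ε ≤ (inner ℂ ψ (act (A ⊗ₖ B) ψ) : ℂ).re)
    (h2im : (inner ℂ ψ (act (A ⊗ₖ B) ψ) : ℂ).im = 0) :
    1 - 9 * ε ≤ (inner ℂ ψ (act ((A * U * star A) ⊗ₖ (1 : Matrix (Fin n) (Fin n) ℂ)) ψ) : ℂ).re := by
  classical
  set V : Matrix (Fin m × Fin n) (Fin m × Fin n) ℂ := U ⊗ₖ (1 : Matrix (Fin n) (Fin n) ℂ) with hVdef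
  set W : Matrix (Fin m × Fin n) (Fin m × Fin n) ℂ := A ⊗ₖ B with hWdef
  set T : Matrix (Fin m × Fin n) (Fin m × Fin n) ℂ :=
    (A * U * star A) ⊗ₖ (1 : Matrix (Fin n) (Fin n) ℂ) with hTdef
  have h1 : (1 : Matrix (Fin n) (Fin n) ℂ) ∈ unitary (Matrix (Fin n) (Fin n) ℂ) := one_mem _
  have hV : V ∈ unitary _ := kron_unitary hU h1
  have hW : W ∈ unitary _ := kron_unitary hA hB
  -- matrix identity T = W * V * star W
  have hT : T = W * V * star W := by
    have hBB : B * Matrix.conjTranspose B = 1 := by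
      rw [← Matrix.star_eq_conjTranspose]
      exact Unitary.mul_star_self_of_mem hB
    rw [hTdef, hWdef, hVdef, Matrix.star_eq_conjTranspose, Matrix.star_eq_conjTranspose,
      kron_conjTranspose, ← Matrix.mul_kronecker_mul, ← Matrix.mul_kronecker_mul,
      Matrix.mul_one, hBB]
  have hTu : T ∈ unitary _ := by
    rw [hT]; exact mul_mem (mul_mem hW hV) (Unitary.star_mem hW)
  -- distances
  set a := ‖act V ψ - ψ‖ with hadef
  set b := ‖act W ψ - ψ‖ with hbdef
  have ha0 : 0 ≤ a := norm_nonneg _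
  have hb0 : 0 ≤ b := norm_nonneg _
  have ha2 : a ^ 2 ≤ 2 * ε := by
    rw [hadef, norm_sq_formula hV ψ hψ]; linarith
  have hb2 : b ^ 2 ≤ 2 * ε := by
    rw [hbdef, norm_sq_formula hW ψ hψ]; linarith
  -- ‖act (star W) ψ - ψ‖ = b
  have hWW : W * star W = 1 := Unitary.mul_star_self_of_mem hW
  have hc : ‖act (star W) ψ - ψ‖ = b := by
    have : act W (act (star W) ψ - ψ) = ψ - act W ψ := by
      rw [act_sub, ← act_mul, hWW, act_one]
    calc ‖act (star W) ψ - ψ‖ = ‖act W (act (star W) ψ - ψ)‖ := (act_norm hW _).symm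
      _ = ‖ψ - act W ψ‖ := by rw [this]
      _ = b := by rw [hbdef, norm_sub_rev]
  -- triangle inequality
  have hdecomp : act T ψ - ψ =
      act W (act V (act (star W) ψ - ψ)) + act W (act V ψ - ψ) + (act W ψ - ψ) := by
    rw [hT]
    simp only [act_mul, act_sub]
    abel
  have htri : ‖act T ψ - ψ‖ ≤ b + a + b := by
    rw [hdecomp]
    calc ‖act W (act V (act (star W) ψ - ψ)) + act W (act V ψ - ψ) + (act W ψ - ψ)‖
        ≤ ‖act W (act V (act (star W) ψ - ψ)) + act W (act V ψ - ψ)‖ + ‖act W ψ - ψ‖ :=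
          norm_add_le _ _
      _ ≤ ‖act W (act V (act (star W) ψ - ψ))‖ + ‖act W (act V ψ - ψ)‖ + ‖act W ψ - ψ‖ := by
          gcongr; exact norm_add_le _ _
      _ = b + a + b := by
          rw [act_norm hW, act_norm hV, hc, act_norm hW]
  have hfinal := norm_sq_formula hTu ψ hψ
  have hsq : ‖act T ψ - ψ‖ ^ 2 ≤ (b + a + b) ^ 2 := by
    have h0 : (0 : ℝ) ≤ ‖act T ψ - ψ‖ := norm_nonneg _
    nlinarith
  rw [hfinal] at hsq
  nlinarith [sq_nonneg (a - b), sq_nonneg (a + b)]
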